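/- Affine Scale Invariance of path methods: fix a coordinate j, real numbers c ≠ 0 and d, and let S : ℝⁿ → ℝⁿ be the map replacing the j-th coordinate x_j by (x_j − d)/c and leaving all other coordinates unchanged. If f₁, f₂ : ℝⁿ → ℝ are continuously differentiable with f₁ = f₂ ∘ S, then for every continuously differentiable path γ : [0,1] → ℝⁿ, the path-method attributions satisfy A_j(f₁, γ) = A_j(f₂, S ∘ γ). -/

import Mathlib

open MeasureTheory

/-- The path-method attribution to coordinate `i` of function `F` along path `γ`:
`A_i(F, γ) = ∫₀¹ ∂F/∂x_i(γ(α)) · γ_i'(α) dα`. -/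
noncomputable def pathAttr (n : ℕ) (F : (Fin n → ℝ) → ℝ) (γ : ℝ → (Fin n → ℝ))
    (i : Fin n) : ℝ :=
  ∫ α in (0:ℝ)..1, fderiv ℝ F (γ α) (Pi.single i 1) * deriv (fun s => γ s i) α

/-- The affine rescaling map on coordinate `j`: it replaces `x j` by `(x j - d) / c`
and leaves all other coordinates unchanged. -/
noncomputable def affineRescale (n : ℕ) (j : Fin n) (c d : ℝ)
    (x : Fin n → ℝ) : Fin n → ℝ :=
  Function.update x j ((x j - d) / c)

/-- Affine Scale Invariance of path methods: if `f₁ = f₂ ∘ S` where `S` rescales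
coordinate `j` affinely, then `A_j(f₁, γ) = A_j(f₂, S ∘ γ)`. -/
theorem path_methods_affine_scale_invariance (n : ℕ) (j : Fin n) (c d : ℝ)
    (hc : c ≠ 0) (f₁ f₂ : (Fin n → ℝ) → ℝ)
    (hf₁ : ContDiff ℝ 1 f₁) (hf₂ : ContDiff ℝ 1 f₂)
    (hcomp : ∀ x : Fin n → ℝ, f₁ x = f₂ (affineRescale n j c d x))
    (γ : ℝ → (Fin n → ℝ)) (hγ : ContDiff ℝ 1 γ) :
    pathAttr n f₁ γ j = pathAttr n f₂ (fun α => affineRescale n j c d (γ α)) j := by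
  -- the linear part of S
  set L : (Fin n → ℝ) →L[ℝ] (Fin n → ℝ) :=
    ContinuousLinearMap.pi (fun i => if i = j then
      (1/c) • ContinuousLinearMap.proj j else ContinuousLinearMap.proj i) with hL
  have hLapply : ∀ x : Fin n → ℝ, L x = Function.update x j (x j / c) := by
    intro x
    ext i
    rcases eq_or_ne i j with rfl | h
    · simp [hL, ContinuousLinearMap.pi_apply]; ring
    · simp [hL, ContinuousLinearMap.pi_apply, h, Function.update_of_ne h]
  have hS : ∀ x : Fin n → ℝ, affineRescale n j c d x = L x + Pi.single j (-d/c) := by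
    intro x
    ext i
    rcases eq_or_ne i j with rfl | h
    · simp [affineRescale, hLapply]; ring
    · simp [affineRescale, hLapply, Function.update_of_ne h, Pi.single_eq_of_ne h]
  have hSdiff : ∀ x : Fin n → ℝ, HasFDerivAt (affineRescale n j c d) L x := by
    intro x
    have : HasFDerivAt (fun x => L x + Pi.single j (-d/c)) L x :=
      (L.hasFDerivAt).add_const _
    exact this.congr_of_eventuallyEq (Filter.Eventually.of_forall fun y => (hS y))
  have hf₂d : Differentiable ℝ f₂ := hf₂.differentiable one_ne_zero
  have hfd : ∀ x, fderiv ℝ f₁ x (Pi.single j 1)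
      = (1/c) * fderiv ℝ f₂ (affineRescale n j c d x) (Pi.single j 1) := by
    intro x
    have h1 : HasFDerivAt f₁
        ((fderiv ℝ f₂ (affineRescale n j c d x)).comp L) x := by
      have := ((hf₂d (affineRescale n j c d x)).hasFDerivAt).comp x (hSdiff x)
      exact this.congr_of_eventuallyEq (Filter.Eventually.of_forall fun y => (hcomp y))
    rw [h1.fderiv]
    have hL1 : L (Pi.single j (1:ℝ)) = (1/c) • (Pi.single j 1 : Fin n → ℝ) := by
      rw [hLapply]
      ext i
      rcases eq_or_ne i j with rfl | h
      · simp
      · simp [Pi.single_eq_of_ne h, Function.update_of_ne h]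
    rw [ContinuousLinearMap.comp_apply, hL1, ContinuousLinearMap.map_smul]
    simp [smul_eq_mul]
  have hderiv : ∀ α : ℝ, deriv (fun s => affineRescale n j c d (γ s) j) α
      = deriv (fun s => γ s j) α / c := by
    intro α
    have : (fun s => affineRescale n j c d (γ s) j) = fun s => (γ s j - d) / c := by
      funext s; simp [affineRescale]
    rw [this, deriv_div_const, deriv_sub_const]
  unfold pathAttr
  apply intervalIntegral.integral_congr
  intro α _
  simp only [hfd, hderiv]
  ring
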